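/- For the unstructured search problem with 1 < |M| < N marked elements out of N, the Lie algebra generated by iH_C and iH_M has dimension exactly 5, where H_C is the diagonal projector onto the marked set M and H_M is the N×N all-ones matrix. -/

import Mathlib

attribute [local instance 100] LieRing.ofAssociativeRing

open Matrix Complex

variable {N : ℕ} (M : Finset (Fin N))

noncomputable def uu (M : Finset (Fin N)) (j : Fin N) : ℂ := if j ∈ M then 1 else 0

noncomputable def B1 (M : Finset (Fin N)) : Matrix (Fin N) (Fin N) ℂ :=
  Complex.I • Matrix.diagonal (fun i => if i ∈ M then (1:ℂ) else 0)
noncomputable def B2 (N : ℕ) : Matrix (Fin N) (Fin N) ℂ :=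
  Complex.I • Matrix.of (fun _ _ => (1:ℂ))
noncomputable def B3 (M : Finset (Fin N)) : Matrix (Fin N) (Fin N) ℂ :=
  Matrix.of fun j k => Complex.I * (uu M j * uu M k)
noncomputable def B4 (M : Finset (Fin N)) : Matrix (Fin N) (Fin N) ℂ :=
  Matrix.of fun j k => Complex.I * (uu M j + uu M k)
noncomputable def B5 (M : Finset (Fin N)) : Matrix (Fin N) (Fin N) ℂ :=
  Matrix.of fun j k => (uu M j - uu M k)

lemma sum_uu : ∑ l : Fin N, uu M l = (M.card : ℂ) := by
  simp [uu, Finset.sum_ite_mem]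

lemma uu_mul (l : Fin N) : uu M l * uu M l = uu M l := by
  by_cases h : l ∈ M <;> simp [uu, h]

lemma uu_sq (l : Fin N) : uu M l ^ 2 = uu M l := by
  by_cases h : l ∈ M <;> simp [uu, h]

lemma sum_master (a b c : ℂ) :
    ∑ x : Fin N, (a * (uu M x * uu M x) + b * uu M x + c) = (a + b) * M.card + c * N := by
  simp only [uu_mul]
  rw [Finset.sum_add_distrib, Finset.sum_add_distrib, ← Finset.mul_sum, ← Finset.mul_sum,
    sum_uu, Finset.sum_const, Finset.card_univ, Fintype.card_fin]
  push_cast; ring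

lemma B1_eq : B1 M = Complex.I • Matrix.diagonal (uu M) := rfl

lemma L12 : ⁅B1 M, B2 N⁆ = -B5 M := by
  rw [B1_eq]
  ext j k
  simp only [Ring.lie_def, B2, B5, Matrix.sub_apply, Matrix.neg_apply,
    Matrix.smul_mul, Matrix.mul_smul, Matrix.smul_apply,
    Matrix.diagonal_mul, Matrix.mul_diagonal, Matrix.of_apply, smul_eq_mul]
  ring_nf
  simp only [uu_sq, Complex.I_sq]
  ring

lemma L13 : ⁅B1 M, B3 M⁆ = 0 := by
  rw [B1_eq]
  ext j k
  simp only [Ring.lie_def, B3, Matrix.sub_apply, Matrix.zero_apply,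
    Matrix.smul_mul, Matrix.mul_smul, Matrix.smul_apply,
    Matrix.diagonal_mul, Matrix.mul_diagonal, Matrix.of_apply, smul_eq_mul]
  ring_nf
  simp only [uu_sq, Complex.I_sq]
  ring

lemma L14 : ⁅B1 M, B4 M⁆ = -B5 M := by
  rw [B1_eq]
  ext j k
  simp only [Ring.lie_def, B4, B5, Matrix.sub_apply, Matrix.neg_apply,
    Matrix.smul_mul, Matrix.mul_smul, Matrix.smul_apply,
    Matrix.diagonal_mul, Matrix.mul_diagonal, Matrix.of_apply, smul_eq_mul]
  ring_nf
  simp only [uu_sq, Complex.I_sq]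
  ring

lemma L15 : ⁅B1 M, B5 M⁆ = B4 M - (2:ℝ) • B3 M := by
  rw [B1_eq]
  ext j k
  simp only [Ring.lie_def, B5, B4, B3, Matrix.sub_apply, Matrix.smul_apply,
    Matrix.smul_mul, Matrix.mul_smul,
    Matrix.diagonal_mul, Matrix.mul_diagonal, Matrix.of_apply, smul_eq_mul,
    Complex.real_smul]
  push_cast
  ring_nf
  simp only [uu_sq, Complex.I_sq]
  ring

lemma L23 : ⁅B2 N, B3 M⁆ = (M.card : ℝ) • B5 M := by
  ext j k
  simp only [Ring.lie_def, B2, B3, B5, Matrix.sub_apply, Matrix.smul_apply,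
    Matrix.smul_mul, Matrix.mul_smul, Matrix.mul_apply, Matrix.of_apply,
    smul_eq_mul, Complex.real_smul]
  rw [Finset.sum_congr rfl (fun x _ => show _ =
        (0:ℂ) * (uu M x * uu M x) + (Complex.I*uu M k)*uu M x + 0 from by ring), sum_master,
      Finset.sum_congr rfl (fun x _ => show _ =
        (0:ℂ) * (uu M x * uu M x) + (Complex.I*uu M j)*uu M x + 0 from by ring), sum_master]
  push_cast
  ring_nf
  try simp only [Complex.I_sq]
  try push_cast
  try ring_nf
  try ring

lemma L24 : ⁅B2 N, B4 M⁆ = (N : ℝ) • B5 M := by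
  ext j k
  simp only [Ring.lie_def, B2, B4, B5, Matrix.sub_apply, Matrix.smul_apply,
    Matrix.smul_mul, Matrix.mul_smul, Matrix.mul_apply, Matrix.of_apply,
    smul_eq_mul, Complex.real_smul]
  rw [Finset.sum_congr rfl (fun x _ => show _ =
        (0:ℂ) * (uu M x * uu M x) + Complex.I*uu M x + (Complex.I*uu M k) from by ring),
      sum_master,
      Finset.sum_congr rfl (fun x _ => show _ =
        (0:ℂ) * (uu M x * uu M x) + Complex.I*uu M x + (Complex.I*uu M j) from by ring),
      sum_master]
  push_cast
  ring_nf
  try simp only [Complex.I_sq]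
  try push_cast
  try ring_nf
  try ring

lemma L25 : ⁅B2 N, B5 M⁆ = (2*M.card : ℝ) • B2 N - (N : ℝ) • B4 M := by
  ext j k
  simp only [Ring.lie_def, B2, B4, B5, Matrix.sub_apply, Matrix.smul_apply,
    Matrix.smul_mul, Matrix.mul_smul, Matrix.mul_apply, Matrix.of_apply,
    smul_eq_mul, Complex.real_smul]
  rw [Finset.sum_congr rfl (fun x _ => show _ =
        (0:ℂ) * (uu M x * uu M x) + 1*uu M x + (-(uu M k)) from by ring),
      sum_master,
      Finset.sum_congr rfl (fun x _ => show _ =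
        (0:ℂ) * (uu M x * uu M x) + (-1)*uu M x + (uu M j) from by ring),
      sum_master]
  push_cast
  ring_nf
  try simp only [Complex.I_sq]
  try push_cast
  try ring_nf
  try ring

lemma L34 : ⁅B3 M, B4 M⁆ = -((M.card : ℝ) • B5 M) := by
  ext j k
  simp only [Ring.lie_def, B3, B4, B5, Matrix.sub_apply, Matrix.neg_apply,
    Matrix.smul_apply, Matrix.mul_apply, Matrix.of_apply, Complex.real_smul]
  rw [Finset.sum_congr rfl (fun x _ => show _ =
        (Complex.I*Complex.I*uu M j) * (uu M x * uu M x)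
        + (Complex.I*Complex.I*(uu M j*uu M k))*uu M x + 0 from by ring), sum_master,
      Finset.sum_congr rfl (fun x _ => show _ =
        (Complex.I*Complex.I*uu M k) * (uu M x * uu M x)
        + (Complex.I*Complex.I*(uu M j*uu M k))*uu M x + 0 from by ring), sum_master]
  push_cast
  ring_nf
  try simp only [Complex.I_sq]
  try push_cast
  try ring_nf
  try ring

lemma L35 : ⁅B3 M, B5 M⁆ = (M.card : ℝ) • B4 M - (2*M.card : ℝ) • B3 M := by
  ext j k
  simp only [Ring.lie_def, B3, B4, B5, Matrix.sub_apply,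
    Matrix.smul_apply, Matrix.mul_apply, Matrix.of_apply, Complex.real_smul]
  rw [Finset.sum_congr rfl (fun x _ => show _ =
        (Complex.I*uu M j) * (uu M x * uu M x)
        + (-(Complex.I*(uu M j*uu M k)))*uu M x + 0 from by ring), sum_master,
      Finset.sum_congr rfl (fun x _ => show _ =
        (-(Complex.I*uu M k)) * (uu M x * uu M x)
        + (Complex.I*(uu M j*uu M k))*uu M x + 0 from by ring), sum_master]
  push_cast
  ring_nf
  try simp only [Complex.I_sq]
  try push_cast
  try ring_nf
  try ring

lemma L45 : ⁅B4 M, B5 M⁆ = (2*M.card : ℝ) • B2 N - (2*N : ℝ) • B3 M := by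
  ext j k
  simp only [Ring.lie_def, B2, B3, B4, B5, Matrix.sub_apply, Matrix.smul_apply,
    Matrix.smul_mul, Matrix.mul_smul, Matrix.mul_apply, Matrix.of_apply,
    smul_eq_mul, Complex.real_smul]
  rw [Finset.sum_congr rfl (fun x _ => show _ =
        Complex.I * (uu M x * uu M x)
        + (Complex.I*uu M j - Complex.I*uu M k)*uu M x
        + (-(Complex.I*(uu M j*uu M k))) from by ring), sum_master,
      Finset.sum_congr rfl (fun x _ => show _ =
        (-Complex.I) * (uu M x * uu M x)
        + (Complex.I*uu M j - Complex.I*uu M k)*uu M x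
        + (Complex.I*(uu M j*uu M k)) from by ring), sum_master]
  push_cast
  ring_nf
  try simp only [Complex.I_sq]
  try push_cast
  try ring_nf
  try ring

noncomputable def Vs (M : Finset (Fin N)) : Submodule ℝ (Matrix (Fin N) (Fin N) ℂ) :=
  Submodule.span ℝ {B1 M, B2 N, B3 M, B4 M, B5 M}

lemma h1mem : B1 M ∈ Vs M := Submodule.subset_span (by simp)
lemma h2mem : B2 N ∈ Vs M := Submodule.subset_span (by simp)
lemma h3mem : B3 M ∈ Vs M := Submodule.subset_span (by simp)
lemma h4mem : B4 M ∈ Vs M := Submodule.subset_span (by simp)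
lemma h5mem : B5 M ∈ Vs M := Submodule.subset_span (by simp)

lemma mem12 : ⁅B1 M, B2 N⁆ ∈ Vs M := by rw [L12]; exact neg_mem (h5mem M)
lemma mem13 : ⁅B1 M, B3 M⁆ ∈ Vs M := by rw [L13]; exact zero_mem _
lemma mem14 : ⁅B1 M, B4 M⁆ ∈ Vs M := by rw [L14]; exact neg_mem (h5mem M)
lemma mem15 : ⁅B1 M, B5 M⁆ ∈ Vs M := by
  rw [L15]; exact sub_mem (h4mem M) (Submodule.smul_mem _ _ (h3mem M))
lemma mem23 : ⁅B2 N, B3 M⁆ ∈ Vs M := by rw [L23]; exact Submodule.smul_mem _ _ (h5mem M)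
lemma mem24 : ⁅B2 N, B4 M⁆ ∈ Vs M := by rw [L24]; exact Submodule.smul_mem _ _ (h5mem M)
lemma mem25 : ⁅B2 N, B5 M⁆ ∈ Vs M := by
  rw [L25]; exact sub_mem (Submodule.smul_mem _ _ (h2mem M)) (Submodule.smul_mem _ _ (h4mem M))
lemma mem34 : ⁅B3 M, B4 M⁆ ∈ Vs M := by rw [L34]; exact neg_mem (Submodule.smul_mem _ _ (h5mem M))
lemma mem35 : ⁅B3 M, B5 M⁆ ∈ Vs M := by
  rw [L35]; exact sub_mem (Submodule.smul_mem _ _ (h4mem M)) (Submodule.smul_mem _ _ (h3mem M))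
lemma mem45 : ⁅B4 M, B5 M⁆ ∈ Vs M := by
  rw [L45]; exact sub_mem (Submodule.smul_mem _ _ (h2mem M)) (Submodule.smul_mem _ _ (h3mem M))

lemma skew_mem {x y : Matrix (Fin N) (Fin N) ℂ} (h : ⁅x, y⁆ ∈ Vs M) : ⁅y, x⁆ ∈ Vs M := by
  rw [← lie_skew]; exact neg_mem h

lemma brackets_mem (a b : Matrix (Fin N) (Fin N) ℂ)
    (ha : a ∈ ({B1 M, B2 N, B3 M, B4 M, B5 M} : Set _))
    (hb : b ∈ ({B1 M, B2 N, B3 M, B4 M, B5 M} : Set _)) : ⁅a, b⁆ ∈ Vs M := by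
  simp only [Set.mem_insert_iff, Set.mem_singleton_iff] at ha hb
  rcases ha with rfl|rfl|rfl|rfl|rfl
  · rcases hb with rfl|rfl|rfl|rfl|rfl
    · rw [lie_self]; exact zero_mem _
    · exact mem12 M
    · exact mem13 M
    · exact mem14 M
    · exact mem15 M
  · rcases hb with rfl|rfl|rfl|rfl|rfl
    · exact skew_mem M (mem12 M)
    · rw [lie_self]; exact zero_mem _
    · exact mem23 M
    · exact mem24 M
    · exact mem25 M
  · rcases hb with rfl|rfl|rfl|rfl|rfl
    · exact skew_mem M (mem13 M)
    · exact skew_mem M (mem23 M)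
    · rw [lie_self]; exact zero_mem _
    · exact mem34 M
    · exact mem35 M
  · rcases hb with rfl|rfl|rfl|rfl|rfl
    · exact skew_mem M (mem14 M)
    · exact skew_mem M (mem24 M)
    · exact skew_mem M (mem34 M)
    · rw [lie_self]; exact zero_mem _
    · exact mem45 M
  · rcases hb with rfl|rfl|rfl|rfl|rfl
    · exact skew_mem M (mem15 M)
    · exact skew_mem M (mem25 M)
    · exact skew_mem M (mem35 M)
    · exact skew_mem M (mem45 M)
    · rw [lie_self]; exact zero_mem _

lemma lie_mem_Vs {x y : Matrix (Fin N) (Fin N) ℂ} (hx : x ∈ Vs M) (hy : y ∈ Vs M) :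
    ⁅x, y⁆ ∈ Vs M := by
  have hgen : ∀ a ∈ ({B1 M, B2 N, B3 M, B4 M, B5 M} : Set _), ∀ y ∈ Vs M, ⁅a, y⁆ ∈ Vs M := by
    intro a ha y hy
    induction hy using Submodule.span_induction with
    | mem z hz => exact brackets_mem M a z ha hz
    | zero => simp
    | add u v hu hv ihu ihv => rw [lie_add]; exact add_mem ihu ihv
    | smul r u hu ih => rw [lie_smul]; exact Submodule.smul_mem _ _ ih
  induction hx using Submodule.span_induction with
  | mem z hz => exact hgen z hz y hy
  | zero => simp
  | add u v hu hv ihu ihv => rw [add_lie]; exact add_mem ihu ihv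
  | smul r u hu ih => rw [smul_lie]; exact Submodule.smul_mem _ _ ih

noncomputable def K (M : Finset (Fin N)) : LieSubalgebra ℝ (Matrix (Fin N) (Fin N) ℂ) :=
  { Vs M with lie_mem' := fun hx hy => lie_mem_Vs M hx hy }

lemma linindep (hM1 : 1 < M.card) (hMN : M.card < N) :
    LinearIndependent ℝ ![B1 M, B2 N, B3 M, B4 M, B5 M] := by
  obtain ⟨j0, hj0, j1, hj1, hne⟩ := Finset.one_lt_card.mp hM1
  have hk : ∃ k : Fin N, k ∉ M := by
    by_contra h
    push_neg at h
    have hsub : Finset.univ ⊆ M := fun x _ => h x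
    have := Finset.card_le_card hsub
    simp at this
    omega
  obtain ⟨k0, hk0⟩ := hk
  rw [Fintype.linearIndependent_iff]
  intro g hg
  rw [Fin.sum_univ_five] at hg
  simp only [Matrix.cons_val_zero, Matrix.cons_val_one, Matrix.head_cons,
    Matrix.cons_val_two, Matrix.tail_cons, Matrix.cons_val_three, Matrix.cons_val_four] at hg
  have E : ∀ a b, (g 0 • B1 M + g 1 • B2 N + g 2 • B3 M + g 3 • B4 M + g 4 • B5 M) a b
      = (0 : Matrix (Fin N) (Fin N) ℂ) a b := fun a b => by rw [hg]
  have E1 := E j0 j0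
  have E2 := E j0 j1
  have E3 := E k0 k0
  have E4 := E j0 k0
  simp only [B1, B2, B3, B4, B5, uu, Matrix.add_apply, Matrix.smul_apply, Matrix.of_apply,
    Matrix.zero_apply, Matrix.diagonal_apply_eq, Matrix.diagonal_apply_ne _ hne,
    hj0, hj1, hk0, if_true, if_false, if_pos, if_neg, smul_eq_mul, Complex.real_smul,
    Matrix.diagonal] at E1 E2 E3 E4
  have hne2 : j0 ≠ k0 := fun h => hk0 (h ▸ hj0)
  rw [Complex.ext_iff] at E1 E2 E3 E4
  simp [Complex.add_im, Complex.add_re, Complex.mul_im, Complex.mul_re, hne, hne2] at E1 E2 E3 E4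
  intro i
  fin_cases i <;> simp <;> linarith [E1, E2, E3, E4.1, E4.2]

/-- For unstructured search with `1 < |M| < N` marked elements, the Lie algebra
generated by `i·H_C` (diagonal projector onto the marked set `M`) and `i·H_M`
(all-ones matrix) has dimension exactly 5. -/
theorem qwoa_search_dla_many_marked {N : ℕ} (M : Finset (Fin N))
    (hM1 : 1 < M.card) (hMN : M.card < N) :
    Module.finrank ℝ
      (LieSubalgebra.lieSpan ℝ (Matrix (Fin N) (Fin N) ℂ)
        {Complex.I • Matrix.diagonal (fun i => if i ∈ M then (1 : ℂ) else 0),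
         Complex.I • Matrix.of (fun _ _ => (1 : ℂ))}) = 5 := by
  have hN0 : (N:ℝ) ≠ 0 := by
    have : 0 < N := lt_of_le_of_lt (Nat.zero_le _) hMN
    positivity
  set L := LieSubalgebra.lieSpan ℝ (Matrix (Fin N) (Fin N) ℂ) {B1 M, B2 N} with hL
  set T := LieSubalgebra.toSubmodule L with hT
  have e1 : B1 M ∈ L := LieSubalgebra.subset_lieSpan (by simp)
  have e2 : B2 N ∈ L := LieSubalgebra.subset_lieSpan (by simp)
  have e5 : B5 M ∈ L := by
    have h := L.lie_mem e1 e2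
    rw [L12] at h
    simpa using neg_mem h
  have t1 : B1 M ∈ T := e1
  have t2 : B2 N ∈ T := e2
  have t5 : B5 M ∈ T := e5
  have t25 : ⁅B2 N, B5 M⁆ ∈ T := L.lie_mem e2 e5
  have t15 : ⁅B1 M, B5 M⁆ ∈ T := L.lie_mem e1 e5
  have hB4 : B4 M = (N:ℝ)⁻¹ • ((2*M.card:ℝ) • B2 N - ⁅B2 N, B5 M⁆) := by
    rw [L25, sub_sub_cancel, smul_smul, inv_mul_cancel₀ hN0, one_smul]
  have t4 : B4 M ∈ T := by
    rw [hB4]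
    exact T.smul_mem _ (sub_mem (T.smul_mem _ t2) t25)
  have hB3 : B3 M = (2:ℝ)⁻¹ • (B4 M - ⁅B1 M, B5 M⁆) := by
    rw [L15, sub_sub_cancel, smul_smul]
    norm_num
  have t3 : B3 M ∈ T := by
    rw [hB3]
    exact T.smul_mem _ (sub_mem t4 t15)
  have hle : L ≤ K M := by
    apply LieSubalgebra.lieSpan_le.mpr
    intro x hx
    simp only [Set.mem_insert_iff, Set.mem_singleton_iff] at hx
    rcases hx with rfl | rfl
    · exact h1mem M
    · exact h2mem M
  have heq : T = Vs M := by
    apply le_antisymm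
    · intro x hx
      exact hle hx
    · apply Submodule.span_le.mpr
      intro x hx
      simp only [Set.mem_insert_iff, Set.mem_singleton_iff] at hx
      rcases hx with rfl | rfl | rfl | rfl | rfl
      · exact t1
      · exact t2
      · exact t3
      · exact t4
      · exact t5
  have hrange : ({B1 M, B2 N, B3 M, B4 M, B5 M} : Set (Matrix (Fin N) (Fin N) ℂ))
      = Set.range ![B1 M, B2 N, B3 M, B4 M, B5 M] := by
    ext x
    simp [Matrix.range_cons, Matrix.range_empty]
    tauto
  have hfin : Module.finrank ℝ (Vs M) = 5 := by
    rw [Vs, hrange, finrank_span_eq_card (linindep M hM1 hMN)]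
    simp
  show Module.finrank ℝ T = 5
  rw [heq]
  exact hfin
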